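/- Let Σ be a finite alphabet and let L = {w ∈ Σ* | alph(w) = Σ} be the language of all words containing every letter of Σ at least once. Then every NFA recognizing L has at least 2^{|Σ|} states. -/

import Mathlib

lemma mem_evalFrom_iff {α σ : Type*} (A : NFA α σ) (w : List α) (S : Set σ) (q : σ) :
    q ∈ A.evalFrom S w ↔ ∃ p ∈ S, q ∈ A.evalFrom {p} w := by
  induction w generalizing S with
  | nil => simp [NFA.evalFrom_nil]
  | cons a w ih =>
    have hstep : ∀ T : Set σ, A.evalFrom T (a :: w) = A.evalFrom (A.stepSet T a) w := by
      intro T; rfl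
    rw [hstep, ih]
    constructor
    · rintro ⟨p', hp', hq⟩
      rw [NFA.mem_stepSet] at hp'
      obtain ⟨p, hp, hp'⟩ := hp'
      refine ⟨p, hp, ?_⟩
      rw [hstep, ih]
      exact ⟨p', NFA.mem_stepSet.2 ⟨p, rfl, hp'⟩, hq⟩
    · rintro ⟨p, hp, hq⟩
      rw [hstep, ih] at hq
      obtain ⟨p', hp', hq⟩ := hq
      rw [NFA.mem_stepSet] at hp'
      obtain ⟨t, ht, hp'⟩ := hp'
      exact ⟨p', NFA.mem_stepSet.2 ⟨p, hp, ht ▸ hp'⟩, hq⟩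



/-- `subk k w` is the set of scattered subwords of `w` of length at most `k`. -/
def subk {α : Type*} (k : ℕ) (w : List α) : Set (List α) :=
  {u | u.length ≤ k ∧ u.Sublist w}

/-- Two words are `k`-equivalent if they have the same subwords of length at most `k`. -/
def kEquiv {α : Type*} (k : ℕ) (u v : List α) : Prop :=
  subk k u = subk k v

/-- A language is `k`-piecewise testable (Simon's characterization):
`k`-equivalent words are equi-members. -/
def IsPT {α : Type*} (k : ℕ) (L : Language α) : Prop :=
  ∀ u v : List α, kEquiv k u v → (u ∈ L ↔ v ∈ L)

/-- A DFA is minimal if all states are reachable and pairwise distinguishable. -/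
def IsMinimalDFA {α σ : Type*} (A : DFA α σ) : Prop :=
  (∀ q : σ, ∃ w : List α, A.eval w = q) ∧
  ∀ p q : σ,
    (∀ w : List α, (A.evalFrom p w ∈ A.accept ↔ A.evalFrom q w ∈ A.accept)) → p = q

/-- There is a simple path (pairwise distinct states) with `m` transitions in the DFA `A`. -/
def DFAHasSimplePath {α σ : Type*} (A : DFA α σ) (m : ℕ) : Prop :=
  ∃ (qs : Fin (m + 1) → σ) (as : Fin m → α),
    Function.Injective qs ∧ ∀ i : Fin m, A.step (qs i.castSucc) (as i) = qs i.succ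

/-- The depth of a DFA: the number of transitions on a longest simple path. -/
noncomputable def dfaDepth {α σ : Type*} (A : DFA α σ) : ℕ :=
  sSup {m | DFAHasSimplePath A m}

/-- There is a simple path (pairwise distinct states) with `m` transitions in the NFA `A`. -/
def NFAHasSimplePath {α σ : Type*} (A : NFA α σ) (m : ℕ) : Prop :=
  ∃ (qs : Fin (m + 1) → σ) (as : Fin m → α),
    Function.Injective qs ∧ ∀ i : Fin m, qs i.succ ∈ A.step (qs i.castSucc) (as i)

/-- The depth of an NFA: the number of transitions on a longest simple path. -/
noncomputable def nfaDepth {α σ : Type*} (A : NFA α σ) : ℕ :=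
  sSup {m | NFAHasSimplePath A m}


/-- Every NFA recognizing the language of all words containing every letter of the
alphabet has at least `2^|Σ|` states. -/
theorem stmt15 {α : Type*} [Fintype α] {σ : Type*} [Fintype σ] (A : NFA α σ)
    (h : A.accepts = {w : List α | ∀ a : α, a ∈ w}) :
    2 ^ Fintype.card α ≤ Fintype.card σ := by
  classical
  -- for each S : Finset α pick a midpoint state
  have key : ∀ S : Finset α, ∃ p : σ, p ∈ A.eval S.toList ∧
      ∃ q ∈ A.accept, q ∈ A.evalFrom {p} Sᶜ.toList := by
    intro S
    have hmem : S.toList ++ Sᶜ.toList ∈ A.accepts := by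
      rw [h]
      intro a
      by_cases ha : a ∈ S
      · exact List.mem_append.2 (Or.inl (Finset.mem_toList.2 ha))
      · exact List.mem_append.2 (Or.inr (Finset.mem_toList.2 (Finset.mem_compl.2 ha)))
    obtain ⟨q, hq, hq'⟩ := hmem
    have : q ∈ A.evalFrom (A.eval S.toList) Sᶜ.toList := by
      have : A.eval (S.toList ++ Sᶜ.toList) = A.evalFrom (A.eval S.toList) Sᶜ.toList := by
        simp [NFA.eval, NFA.evalFrom, List.foldl_append]
      rwa [this] at hq'
    rw [mem_evalFrom_iff] at this
    obtain ⟨p, hp, hpq⟩ := this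
    exact ⟨p, hp, q, hq, hpq⟩
  choose f hf1 hf2 using key
  -- accepted word lemma
  have acc : ∀ S T : Finset α, f S = f T → S.toList ++ Tᶜ.toList ∈ A.accepts := by
    intro S T hST
    obtain ⟨q, hq, hq'⟩ := hf2 T
    refine ⟨q, hq, ?_⟩
    have : A.eval (S.toList ++ Tᶜ.toList) = A.evalFrom (A.eval S.toList) Tᶜ.toList := by
      simp [NFA.eval, NFA.evalFrom, List.foldl_append]
    rw [this, mem_evalFrom_iff]
    exact ⟨f S, hf1 S, hST ▸ hq'⟩
  have hinj : Function.Injective f := by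
    intro S T hST
    by_contra hne
    have key2 : ∀ S T : Finset α, f S = f T → T ⊆ S := by
      intro S T hST' a haT
      have := acc S T hST'
      rw [h] at this
      have ha := this a
      rcases List.mem_append.1 ha with h1 | h2
      · exact Finset.mem_toList.1 h1
      · exact absurd haT (Finset.mem_compl.1 (Finset.mem_toList.1 h2))
    exact hne (Finset.Subset.antisymm (key2 T S hST.symm) (key2 S T hST))
  calc 2 ^ Fintype.card α = Fintype.card (Finset α) := Fintype.card_finset.symm
    _ ≤ Fintype.card σ := Fintype.card_le_of_injective f hinj
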